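/- arXiv:1705.05866 — 4 statements merged into one kernel-verified Lean document; each statement's English description precedes it below -/
import Mathlib

section
/- Let K be a complex Hilbert space and let Q₀ be a positive contraction on K. Then the block operator Q on K × K given by Q(x, y) = ( Q₀x + Q₀^{1/2}(I − Q₀)^{1/2} y , Q₀^{1/2}(I − Q₀)^{1/2} x + (I − Q₀) y ) is an orthogonal projection, i.e. Q = Q* = Q². -/
open Pointwise

set_option synthInstance.maxHeartbeats 400000
set_option maxHeartbeats 1000000

section aux

variable {R : Type*} [Ring R]

lemma block_aux1 (a b : R) (hc : Commute a b) (h : a * a + b * b = 1) :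
    a * a * (a * a) + (a * b) * (a * b) = a * a := by
  have key : (a * b) * (a * b) = (a * a) * (b * b) :=
    hc.symm.mul_mul_mul_comm a b
  rw [key, ← mul_add, h, mul_one]

lemma block_aux2 (a b : R) (hc : Commute a b) (h : a * a + b * b = 1) :
    (a * a) * (a * b) + (a * b) * (b * b) = a * b := by
  have h1 : Commute (a * a) (a * b) :=
    ((Commute.refl a).mul_right hc).mul_left ((Commute.refl a).mul_right hc)
  rw [h1.eq, ← mul_add, h, mul_one]

lemma block_aux3 (a b : R) (hc : Commute a b) (h : a * a + b * b = 1) :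
    (a * b) * (a * a) + (b * b) * (a * b) = a * b := by
  have h1 : Commute (b * b) (a * b) :=
    (hc.symm.mul_right (Commute.refl b)).mul_left (hc.symm.mul_right (Commute.refl b))
  rw [h1.eq, ← mul_add, h, mul_one]

lemma block_aux4 (a b : R) (hc : Commute a b) (h : a * a + b * b = 1) :
    (a * b) * (a * b) + (b * b) * (b * b) = b * b := by
  have hcc : Commute (a * a) (b * b) :=
    (hc.mul_right hc).mul_left (hc.mul_right hc)
  have key : (a * b) * (a * b) = (b * b) * (a * a) := by
    rw [hc.symm.mul_mul_mul_comm a b, hcc.eq]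
  rw [key, ← mul_add, h, mul_one]

end aux

/-- For a positive contraction `Q₀` on a complex Hilbert space `K`, the block operator
`Q(x, y) = (Q₀x + Q₀^{1/2}(I - Q₀)^{1/2}y, Q₀^{1/2}(I - Q₀)^{1/2}x + (I - Q₀)y)`
on `K × K` is an orthogonal projection. -/
theorem block_is_orthogonal_projection
    {K : Type*} [NormedAddCommGroup K] [InnerProductSpace ℂ K] [CompleteSpace K]
    (Q₀ : K →L[ℂ] K) (hsa : IsSelfAdjoint Q₀) (hpos : 0 ≤ Q₀) (hc : ‖Q₀‖ ≤ 1)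
    (Q : WithLp 2 (K × K) →L[ℂ] WithLp 2 (K × K))
    (hQ : ∀ x y : K,
      Q ((WithLp.equiv 2 (K × K)).symm (x, y)) =
        (WithLp.equiv 2 (K × K)).symm
          (Q₀ x + (CFC.sqrt Q₀) ((CFC.sqrt (1 - Q₀)) y),
           (CFC.sqrt Q₀) ((CFC.sqrt (1 - Q₀)) x) + (1 - Q₀) y)) :
    IsSelfAdjoint Q ∧ Q * Q = Q := by
  set A := CFC.sqrt Q₀ with hAdef
  set B := CFC.sqrt (1 - Q₀) with hBdef
  -- spectrum facts
  have hspec_nonneg : ∀ x ∈ spectrum ℝ Q₀, (0 : ℝ) ≤ x :=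
    fun x hx => spectrum_nonneg_of_nonneg hpos hx
  have hQ₀le1 : Q₀ ≤ 1 := (CStarAlgebra.norm_le_one_iff_of_nonneg Q₀ hpos).mp hc
  have h1Qpos : (0 : K →L[ℂ] K) ≤ 1 - Q₀ := sub_nonneg.mpr hQ₀le1
  have hspec_le_one : ∀ x ∈ spectrum ℝ Q₀, x ≤ 1 := by
    intro x hx
    have hmem : (1 : ℝ) - x ∈ spectrum ℝ (1 - Q₀) := by
      have h' : (1 : ℝ) - x ∈ ({(1 : ℝ)} : Set ℝ) - spectrum ℝ Q₀ :=
        Set.sub_mem_sub (Set.mem_singleton 1) hx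
      rwa [spectrum.singleton_sub_eq, map_one] at h'
    linarith [spectrum_nonneg_of_nonneg h1Qpos hmem]
  -- A and B as cfc of Q₀
  have hA_cfc : A = cfc Real.sqrt Q₀ := by
    refine CFC.sqrt_unique ?_ (cfc_nonneg fun x _ => Real.sqrt_nonneg x)
    rw [← cfc_mul Real.sqrt Real.sqrt Q₀ Real.continuous_sqrt.continuousOn
      Real.continuous_sqrt.continuousOn]
    calc cfc (fun x => Real.sqrt x * Real.sqrt x) Q₀
        = cfc (id : ℝ → ℝ) Q₀ :=
          cfc_congr fun x hx => Real.mul_self_sqrt (hspec_nonneg x hx)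
      _ = Q₀ := cfc_id ℝ Q₀
  have hB_cfc : B = cfc (fun x : ℝ => Real.sqrt (1 - x)) Q₀ := by
    refine CFC.sqrt_unique ?_ (cfc_nonneg fun x _ => Real.sqrt_nonneg _)
    have hcont : ContinuousOn (fun x : ℝ => Real.sqrt (1 - x)) (spectrum ℝ Q₀) :=
      (Real.continuous_sqrt.comp (continuous_const.sub continuous_id)).continuousOn
    rw [← cfc_mul _ _ Q₀ hcont hcont]
    calc cfc (fun x : ℝ => Real.sqrt (1 - x) * Real.sqrt (1 - x)) Q₀
        = cfc (fun x : ℝ => 1 - x) Q₀ :=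
          cfc_congr fun x hx =>
            Real.mul_self_sqrt (by linarith [hspec_le_one x hx])
      _ = 1 - Q₀ := by
          rw [cfc_sub (fun _ : ℝ => (1 : ℝ)) (fun x : ℝ => x) Q₀, cfc_const_one ℝ Q₀, cfc_id' ℝ Q₀]
  have hcomm : Commute A B := by
    rw [hA_cfc, hB_cfc]; exact cfc_commute_cfc _ _ _
  -- operator facts
  have hApos : (0 : K →L[ℂ] K) ≤ A := CFC.sqrt_nonneg Q₀
  have hBpos : (0 : K →L[ℂ] K) ≤ B := CFC.sqrt_nonneg (1 - Q₀)
  have hAsa : IsSelfAdjoint A := IsSelfAdjoint.of_nonneg hApos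
  have hBsa : IsSelfAdjoint B := IsSelfAdjoint.of_nonneg hBpos
  have hAA : A * A = Q₀ := CFC.sqrt_mul_sqrt_self Q₀ hpos
  have hBB : B * B = 1 - Q₀ := CFC.sqrt_mul_sqrt_self (1 - Q₀) h1Qpos
  have hsum : A * A + B * B = 1 := by rw [hAA, hBB]; abel
  have e1 : Q₀ * Q₀ + (A * B) * (A * B) = Q₀ := by
    rw [← hAA]; exact block_aux1 A B hcomm hsum
  have e2 : Q₀ * (A * B) + (A * B) * (1 - Q₀) = A * B := by
    rw [← hBB, ← hAA]; exact block_aux2 A B hcomm hsum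
  have e3 : (A * B) * Q₀ + (1 - Q₀) * (A * B) = A * B := by
    rw [← hBB, ← hAA]; exact block_aux3 A B hcomm hsum
  have e4 : (A * B) * (A * B) + (1 - Q₀) * (1 - Q₀) = 1 - Q₀ := by
    rw [← hBB]; exact block_aux4 A B hcomm hsum
  -- pointwise commutation
  have hcomm' : ∀ v : K, A (B v) = B (A v) := by
    intro v
    have := ContinuousLinearMap.ext_iff.mp hcomm.eq v
    simpa [ContinuousLinearMap.mul_apply] using this
  constructor
  · rw [ContinuousLinearMap.isSelfAdjoint_iff_isSymmetric]
    intro z w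
    obtain ⟨⟨x₁, y₁⟩, rfl⟩ : ∃ p, z = (WithLp.equiv 2 (K × K)).symm p :=
      ⟨WithLp.equiv 2 (K × K) z, ((WithLp.equiv 2 (K × K)).symm_apply_apply z).symm⟩
    obtain ⟨⟨x₂, y₂⟩, rfl⟩ : ∃ p, w = (WithLp.equiv 2 (K × K)).symm p :=
      ⟨WithLp.equiv 2 (K × K) w, ((WithLp.equiv 2 (K × K)).symm_apply_apply w).symm⟩
    simp only [ContinuousLinearMap.coe_coe]
    rw [hQ, hQ]
    have hsymQ : ∀ u v : K, (inner ℂ (Q₀ u) v : ℂ) = inner ℂ u (Q₀ v) :=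
      fun u v => ContinuousLinearMap.isSelfAdjoint_iff_isSymmetric.mp hsa u v
    have hsymA : ∀ u v : K, (inner ℂ (A u) v : ℂ) = inner ℂ u (A v) :=
      fun u v => ContinuousLinearMap.isSelfAdjoint_iff_isSymmetric.mp hAsa u v
    have hsymB : ∀ u v : K, (inner ℂ (B u) v : ℂ) = inner ℂ u (B v) :=
      fun u v => ContinuousLinearMap.isSelfAdjoint_iff_isSymmetric.mp hBsa u v
    have hsym1Q : ∀ u v : K, (inner ℂ ((1 - Q₀) u) v : ℂ) = inner ℂ u ((1 - Q₀) v) :=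
      fun u v => ContinuousLinearMap.isSelfAdjoint_iff_isSymmetric.mp
        ((IsSelfAdjoint.one (R := K →L[ℂ] K)).sub hsa) u v
    simp only [WithLp.prod_inner_apply, WithLp.equiv_symm_apply, WithLp.ofLp_toLp,
      inner_add_left, inner_add_right]
    rw [hsymQ x₁ x₂, hsym1Q y₁ y₂, hsymA (B y₁) x₂, hsymB y₁ (A x₂), ← hcomm' x₂,
      hsymA (B x₁) y₂, hsymB x₁ (A y₂), ← hcomm' y₂]
    ring
  · ext z
    obtain ⟨⟨x, y⟩, rfl⟩ : ∃ p, z = (WithLp.equiv 2 (K × K)).symm p :=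
      ⟨WithLp.equiv 2 (K × K) z, ((WithLp.equiv 2 (K × K)).symm_apply_apply z).symm⟩
    rw [ContinuousLinearMap.mul_apply, hQ, hQ]
    refine congrArg _ ?_
    have H1 := ContinuousLinearMap.ext_iff.mp e1 x
    have H2 := ContinuousLinearMap.ext_iff.mp e2 y
    have H3 := ContinuousLinearMap.ext_iff.mp e3 x
    have H4 := ContinuousLinearMap.ext_iff.mp e4 y
    simp only [ContinuousLinearMap.add_apply, ContinuousLinearMap.mul_apply] at H1 H2 H3 H4
    refine Prod.ext ?_ ?_ <;> simp only [map_add]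
    · rw [add_add_add_comm, H1, H2]
    · rw [add_add_add_comm, H3, H4]
end

section
/- There exist orthogonal projections P and Q on the complex Hilbert space H = ℓ²(ℕ, ℂ) × ℓ²(ℕ, ℂ) such that σ(PQ + QP) = [−1/4, 2]. -/
set_option synthInstance.maxHeartbeats 400000
set_option maxHeartbeats 1000000

noncomputable section ProjAux
namespace ProjAux

open ContinuousLinearMap Set
open scoped ENNReal Pointwise

abbrev Esp : Type := lp (fun _ : ℕ => ℂ) 2
abbrev Hsp : Type := WithLp 2 (Esp × Esp)

/-- membership of a pointwise-multiplied sequence -/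
lemma memℓp_mul (a : ℕ → ℝ) (ha : ∀ n, |a n| ≤ 1) (f : Esp) :
    Memℓp (fun n => (a n : ℂ) * f n) 2 := by
  apply memℓp_gen
  refine Summable.of_nonneg_of_le (fun n => by positivity) (fun n => ?_)
    ((lp.memℓp f).summable (by norm_num))
  apply Real.rpow_le_rpow (by positivity) ?_ (by norm_num)
  rw [norm_mul, Complex.norm_real]
  calc ‖a n‖ * ‖f n‖ ≤ 1 * ‖f n‖ := by
        apply mul_le_mul_of_nonneg_right _ (norm_nonneg _)
        simpa [Real.norm_eq_abs] using ha n
    _ = ‖f n‖ := one_mul _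

/-- Pointwise multiplication by a real sequence bounded by 1, as a continuous linear map. -/
def mulOp (a : ℕ → ℝ) (ha : ∀ n, |a n| ≤ 1) : Esp →L[ℂ] Esp :=
  LinearMap.mkContinuous
    { toFun := fun f => ⟨fun n => (a n : ℂ) * f n, memℓp_mul a ha f⟩
      map_add' := by
        intro f g; apply lp.ext; funext n
        simp [lp.coeFn_add, mul_add]; rfl
      map_smul' := by
        intro c f; apply lp.ext; funext n
        simp [lp.coeFn_smul]
        ring }
    1
    (by
      intro f
      rw [one_mul]
      have h1 : ∀ s : Finset ℕ,
          ∑ i ∈ s, ‖(a i : ℂ) * f i‖ ^ (2 : ℝ≥0∞).toReal ≤ ‖f‖ ^ (2 : ℝ≥0∞).toReal := by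
        intro s
        refine le_trans (Finset.sum_le_sum (fun i _ => ?_))
          (lp.sum_rpow_le_norm_rpow (by norm_num) f s)
        apply Real.rpow_le_rpow (by positivity) ?_ (by norm_num)
        rw [norm_mul, Complex.norm_real]
        calc ‖a i‖ * ‖f i‖ ≤ 1 * ‖f i‖ := by
              apply mul_le_mul_of_nonneg_right _ (norm_nonneg _)
              simpa [Real.norm_eq_abs] using ha i
          _ = ‖f i‖ := one_mul _
      exact lp.norm_le_of_forall_sum_le (by norm_num) (norm_nonneg f) h1)


@[simp] lemma mulOp_apply (a : ℕ → ℝ) (ha : ∀ n, |a n| ≤ 1) (f : Esp) (n : ℕ) :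
    (mulOp a ha f) n = (a n : ℂ) * f n := rfl

lemma mulOp_symm (a : ℕ → ℝ) (ha : ∀ n, |a n| ≤ 1) (f g : Esp) :
    inner (𝕜 := ℂ) (mulOp a ha f) g = inner (𝕜 := ℂ) f (mulOp a ha g) := by
  rw [lp.inner_eq_tsum, lp.inner_eq_tsum]
  apply tsum_congr
  intro n
  simp only [mulOp_apply, RCLike.inner_apply, map_mul, Complex.conj_ofReal]
  ring

/-- The canonical equivalence. -/
def eH : Hsp ≃L[ℂ] Esp × Esp := WithLp.prodContinuousLinearEquiv 2 ℂ Esp Esp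

/-- 2×2 block operator. -/
def Lop (A B C D : Esp →L[ℂ] Esp) : Hsp →L[ℂ] Hsp :=
  eH.symm.toContinuousLinearMap.comp
    ((((A.comp (ContinuousLinearMap.fst ℂ Esp Esp) + B.comp (ContinuousLinearMap.snd ℂ Esp Esp))).prod
      ((C.comp (ContinuousLinearMap.fst ℂ Esp Esp) + D.comp (ContinuousLinearMap.snd ℂ Esp Esp)))).comp
      eH.toContinuousLinearMap)

lemma Lop_apply_fst (A B C D : Esp →L[ℂ] Esp) (u : Hsp) :
    (Lop A B C D u).fst = A u.fst + B u.snd := rfl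

lemma Lop_apply_snd (A B C D : Esp →L[ℂ] Esp) (u : Hsp) :
    (Lop A B C D u).snd = C u.fst + D u.snd := rfl

lemma Hsp_ext {u v : Hsp} (h1 : u.fst = v.fst) (h2 : u.snd = v.snd) : u = v :=
  WithLp.ofLp_injective 2 (Prod.ext h1 h2)

lemma Lop_mul (A B C D A' B' C' D' : Esp →L[ℂ] Esp) :
    Lop A B C D * Lop A' B' C' D' =
      Lop (A.comp A' + B.comp C') (A.comp B' + B.comp D')
          (C.comp A' + D.comp C') (C.comp B' + D.comp D') := by
  refine ContinuousLinearMap.ext fun u => Hsp_ext ?_ ?_ <;>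
    simp only [ContinuousLinearMap.mul_apply, Lop_apply_fst, Lop_apply_snd,
      ContinuousLinearMap.add_apply, ContinuousLinearMap.comp_apply, map_add] <;>
    abel


/-! ### The sequences -/

def clamp (x : ℝ) : ℝ := max 0 (min 1 x)

lemma clamp_nonneg (x : ℝ) : 0 ≤ clamp x := le_max_left _ _
lemma clamp_le_one (x : ℝ) : clamp x ≤ 1 := max_le (by norm_num) (min_le_left _ _)
lemma continuous_clamp : Continuous clamp :=
  continuous_const.max (continuous_const.min continuous_id)
lemma clamp_of_mem {x : ℝ} (h0 : 0 ≤ x) (h1 : x ≤ 1) : clamp x = x := by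
  unfold clamp; rw [min_eq_right h1, max_eq_right h0]

def cseq (n : ℕ) : ℝ := clamp ((Denumerable.eqv ℚ).symm n : ℚ)
def sseq (n : ℕ) : ℝ := Real.sqrt (1 - cseq n ^ 2)

lemma cseq_nonneg (n : ℕ) : 0 ≤ cseq n := clamp_nonneg _
lemma cseq_le_one (n : ℕ) : cseq n ≤ 1 := clamp_le_one _
lemma sseq_nonneg (n : ℕ) : 0 ≤ sseq n := Real.sqrt_nonneg _
lemma c_sq_add_s_sq (n : ℕ) : cseq n ^ 2 + sseq n ^ 2 = 1 := by
  have h1 : (0:ℝ) ≤ 1 - cseq n ^ 2 := by nlinarith [cseq_nonneg n, cseq_le_one n]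
  rw [sseq, Real.sq_sqrt h1]; ring
lemma sseq_le_one (n : ℕ) : sseq n ≤ 1 := by nlinarith [c_sq_add_s_sq n, sseq_nonneg n]

lemma abs_le_one_of_mem {x : ℝ} (h0 : 0 ≤ x) (h1 : x ≤ 1) : |x| ≤ 1 := abs_le.2 ⟨by linarith, h1⟩

lemma hc2 : ∀ n, |cseq n ^ 2| ≤ 1 := fun n =>
  abs_le_one_of_mem (by positivity) (by nlinarith [cseq_nonneg n, cseq_le_one n])
lemma hs2 : ∀ n, |sseq n ^ 2| ≤ 1 := fun n =>
  abs_le_one_of_mem (by positivity) (by nlinarith [sseq_nonneg n, sseq_le_one n])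
lemma hcs : ∀ n, |cseq n * sseq n| ≤ 1 := fun n =>
  abs_le_one_of_mem (mul_nonneg (cseq_nonneg n) (sseq_nonneg n))
    (by nlinarith [cseq_nonneg n, cseq_le_one n, sseq_nonneg n, sseq_le_one n])

/-! ### The projections -/

def Pop : Hsp →L[ℂ] Hsp := Lop 1 0 0 0
def Qop : Hsp →L[ℂ] Hsp :=
  Lop (mulOp (fun n => cseq n ^ 2) hc2) (mulOp (fun n => cseq n * sseq n) hcs)
      (mulOp (fun n => cseq n * sseq n) hcs) (mulOp (fun n => sseq n ^ 2) hs2)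

lemma cast_id (n : ℕ) : ((cseq n : ℂ))^2 + ((sseq n : ℂ))^2 = 1 := by
  exact_mod_cast congrArg Complex.ofReal (c_sq_add_s_sq n)

lemma Pop_mul_Pop : Pop * Pop = Pop := by
  rw [Pop, Lop_mul]
  simp [ContinuousLinearMap.one_def]

lemma op_ext {T T' : Esp →L[ℂ] Esp} (h : ∀ (f : Esp) (n : ℕ), T f n = T' f n) : T = T' :=
  ContinuousLinearMap.ext fun f => lp.ext (funext fun n => h f n)

lemma Qop_mul_Qop : Qop * Qop = Qop := by
  rw [Qop, Lop_mul]
  congr 1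
  · refine op_ext fun f n => ?_
    simp only [ContinuousLinearMap.add_apply, ContinuousLinearMap.comp_apply, mulOp_apply,
      lp.coeFn_add, Pi.add_apply]
    push_cast
    linear_combination ((cseq n:ℂ)^2 * f n) * cast_id n
  · refine op_ext fun f n => ?_
    simp only [ContinuousLinearMap.add_apply, ContinuousLinearMap.comp_apply, mulOp_apply,
      lp.coeFn_add, Pi.add_apply]
    push_cast
    linear_combination ((cseq n:ℂ) * (sseq n:ℂ) * f n) * cast_id n
  · refine op_ext fun f n => ?_
    simp only [ContinuousLinearMap.add_apply, ContinuousLinearMap.comp_apply, mulOp_apply,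
      lp.coeFn_add, Pi.add_apply]
    push_cast
    linear_combination ((cseq n:ℂ) * (sseq n:ℂ) * f n) * cast_id n
  · refine op_ext fun f n => ?_
    simp only [ContinuousLinearMap.add_apply, ContinuousLinearMap.comp_apply, mulOp_apply,
      lp.coeFn_add, Pi.add_apply]
    push_cast
    linear_combination ((sseq n:ℂ)^2 * f n) * cast_id n


lemma Pop_sa : IsSelfAdjoint Pop := by
  rw [ContinuousLinearMap.isSelfAdjoint_iff_isSymmetric]
  intro u v
  simp only [WithLp.prod_inner_apply, ContinuousLinearMap.coe_coe, Pop, Lop_apply_fst, Lop_apply_snd,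
    WithLp.ofLp_fst, WithLp.ofLp_snd, ContinuousLinearMap.one_apply, ContinuousLinearMap.zero_apply, add_zero, zero_add,
    inner_zero_left, inner_zero_right]

lemma Qop_sa : IsSelfAdjoint Qop := by
  rw [ContinuousLinearMap.isSelfAdjoint_iff_isSymmetric]
  intro u v
  simp only [WithLp.prod_inner_apply, ContinuousLinearMap.coe_coe, Qop, Lop_apply_fst, Lop_apply_snd,
    WithLp.ofLp_fst, WithLp.ofLp_snd, inner_add_left, inner_add_right]
  rw [mulOp_symm, mulOp_symm, mulOp_symm, mulOp_symm]
  ring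


/-! ### Eigenvalues -/

def Sop : Hsp →L[ℂ] Hsp := Pop + Qop

lemma mem_spectrum_of_eigenvector {T : Hsp →L[ℂ] Hsp} {lam : ℂ} {v : Hsp}
    (hv : v ≠ 0) (h : T v = lam • v) : lam ∈ spectrum ℂ T := by
  rw [spectrum.mem_iff]
  intro hu
  have h0 : (algebraMap ℂ (Hsp →L[ℂ] Hsp) lam - T) v = 0 := by
    simp [Algebra.algebraMap_eq_smul_one, ContinuousLinearMap.sub_apply, h]
  apply hv
  lift (algebraMap ℂ (Hsp →L[ℂ] Hsp) lam - T) to (Hsp →L[ℂ] Hsp)ˣ using hu with w hw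
  calc v = ((↑w⁻¹ * ↑w : Hsp →L[ℂ] Hsp)) v := by
        rw [Units.inv_mul]; simp
    _ = 0 := by rw [ContinuousLinearMap.mul_apply, h0, map_zero]

def vvec (n : ℕ) (α β : ℂ) : Hsp := eH.symm (lp.single 2 n α, lp.single 2 n β)

lemma vvec_fst (n : ℕ) (α β : ℂ) : (vvec n α β).fst = lp.single 2 n α := rfl
lemma vvec_snd (n : ℕ) (α β : ℂ) : (vvec n α β).snd = lp.single 2 n β := rfl

lemma single_add (n : ℕ) (x y : ℂ) :
    lp.single 2 n x + lp.single 2 n y = (lp.single 2 n (x + y) : Esp) := by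
  apply lp.ext; funext j
  by_cases hj : j = n <;>
    simp [lp.coeFn_add, lp.single_apply, Pi.single_apply, hj]

lemma mulOp_single (a : ℕ → ℝ) (ha : ∀ n, |a n| ≤ 1) (n : ℕ) (x : ℂ) :
    mulOp a ha (lp.single 2 n x) = (lp.single 2 n ((a n : ℂ) * x) : Esp) := by
  apply lp.ext; funext j
  by_cases hj : j = n <;>
    simp [lp.single_apply, Pi.single_apply, hj]

lemma vvec_ne_zero {n : ℕ} {α β : ℂ} (hβ : β ≠ 0) : vvec n α β ≠ 0 := by
  intro h
  apply hβ
  have := congrArg (fun w : Hsp => (w.snd : ∀ _ : ℕ, ℂ) n) h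
  simpa [vvec_snd, lp.single_apply, Pi.single_apply] using this

lemma smul_vvec (lam : ℂ) (n : ℕ) (α β : ℂ) :
    lam • vvec n α β = vvec n (lam * α) (lam * β) := by
  apply Hsp_ext
  · rw [vvec_fst, WithLp.smul_fst, vvec_fst, ← lp.single_smul]; rfl
  · rw [vvec_snd, WithLp.smul_snd, vvec_snd, ← lp.single_smul]; rfl

lemma Sop_vvec (n : ℕ) (α β : ℂ) :
    Sop (vvec n α β) =
      vvec n ((1 + (cseq n : ℂ) ^ 2) * α + (cseq n : ℂ) * (sseq n : ℂ) * β)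
        ((cseq n : ℂ) * (sseq n : ℂ) * α + (sseq n : ℂ) ^ 2 * β) := by
  apply Hsp_ext
  · show (Pop (vvec n α β)).fst + (Qop (vvec n α β)).fst = _
    rw [Pop, Qop, Lop_apply_fst, Lop_apply_fst, vvec_fst, vvec_snd, vvec_fst]
    simp only [ContinuousLinearMap.one_apply, ContinuousLinearMap.zero_apply, add_zero,
      mulOp_single]
    rw [single_add, single_add]
    congr 1
    push_cast
    ring
  · show (Pop (vvec n α β)).snd + (Qop (vvec n α β)).snd = _
    rw [Pop, Qop, Lop_apply_snd, Lop_apply_snd, vvec_fst, vvec_snd, vvec_snd]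
    simp only [ContinuousLinearMap.zero_apply, add_zero, zero_add, mulOp_single]
    rw [single_add]
    congr 1
    push_cast
    ring

lemma vvec_ne_zero' {n : ℕ} {α β : ℂ} (hα : α ≠ 0) : vvec n α β ≠ 0 := by
  intro h
  apply hα
  have := congrArg (fun w : Hsp => (w.fst : ∀ _ : ℕ, ℂ) n) h
  simpa [vvec_fst, lp.single_apply, Pi.single_apply] using this

lemma mem_spec_one_add (n : ℕ) : (((1 + cseq n : ℝ)) : ℂ) ∈ spectrum ℂ Sop := by
  refine mem_spectrum_of_eigenvector
    (v := vvec n ((1 + cseq n : ℝ) : ℂ) ((sseq n : ℝ) : ℂ)) ?_ ?_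
  · exact vvec_ne_zero' (Complex.ofReal_ne_zero.mpr (by nlinarith [cseq_nonneg n]))
  · rw [Sop_vvec, smul_vvec]
    congr 1
    · push_cast
      linear_combination (cseq n : ℂ) * cast_id n
    · push_cast
      linear_combination (sseq n : ℂ) * cast_id n

lemma mem_spec_one_sub (n : ℕ) : (((1 - cseq n : ℝ)) : ℂ) ∈ spectrum ℂ Sop := by
  refine mem_spectrum_of_eigenvector
    (v := vvec n ((sseq n : ℝ) : ℂ) (-((1 + cseq n : ℝ) : ℂ))) ?_ ?_
  · exact vvec_ne_zero (neg_ne_zero.mpr (Complex.ofReal_ne_zero.mpr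
      (by nlinarith [cseq_nonneg n])))
  · rw [Sop_vvec, smul_vvec]
    congr 1
    · push_cast
      ring
    · push_cast
      linear_combination (-1 : ℂ) * cast_id n


/-! ### Spectrum of S -/

lemma Sop_sa : IsSelfAdjoint Sop := by rw [Sop]; exact IsSelfAdjoint.add (R := Hsp →L[ℂ] Hsp) Pop_sa Qop_sa

lemma Pop_nonneg : (0 : Hsp →L[ℂ] Hsp) ≤ Pop := by
  have h := star_mul_self_nonneg Pop
  rwa [Pop_sa.star_eq, Pop_mul_Pop] at h

lemma Qop_nonneg : (0 : Hsp →L[ℂ] Hsp) ≤ Qop := by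
  have h := star_mul_self_nonneg Qop
  rwa [Qop_sa.star_eq, Qop_mul_Qop] at h

lemma one_sub_proj_nonneg {T : Hsp →L[ℂ] Hsp} (hsa : IsSelfAdjoint T) (hT : T * T = T) :
    (0 : Hsp →L[ℂ] Hsp) ≤ 1 - T := by
  have h := star_mul_self_nonneg (1 - T)
  have hmul : (1 - T) * (1 - T) = 1 - T := by
    rw [sub_mul, mul_sub, mul_sub, one_mul, mul_one, hT]
    abel
  rwa [star_sub, star_one, hsa.star_eq, hmul] at h

lemma Sop_nonneg : (0 : Hsp →L[ℂ] Hsp) ≤ Sop := add_nonneg Pop_nonneg Qop_nonneg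

lemma two_sub_Sop_nonneg : (0 : Hsp →L[ℂ] Hsp) ≤ algebraMap ℝ (Hsp →L[ℂ] Hsp) 2 - Sop := by
  have h1 := one_sub_proj_nonneg Pop_sa Pop_mul_Pop
  have h2 := one_sub_proj_nonneg Qop_sa Qop_mul_Qop
  have : algebraMap ℝ (Hsp →L[ℂ] Hsp) 2 - Sop = (1 - Pop) + (1 - Qop) := by
    rw [map_ofNat, Sop, show (2 : Hsp →L[ℂ] Hsp) = 1 + 1 from one_add_one_eq_two.symm]
    abel
  rw [this]
  exact add_nonneg h1 h2

lemma spec_S_subset : spectrum ℂ Sop ⊆ Complex.ofReal '' Set.Icc (0:ℝ) 2 := by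
  rw [← Sop_sa.spectrumRestricts.algebraMap_image]
  apply Set.image_mono
  intro r hr
  constructor
  · exact spectrum_nonneg_of_nonneg Sop_nonneg hr
  · have hmem : (2 : ℝ) - r ∈ ({2} : Set ℝ) - spectrum ℝ Sop :=
      Set.sub_mem_sub rfl hr
    rw [spectrum.singleton_sub_eq] at hmem
    have := spectrum_nonneg_of_nonneg two_sub_Sop_nonneg hmem
    linarith

/-- Every value in `[0,1]` is a limit of values of `cseq`. -/
lemma cseq_dense {c : ℝ} (h0 : 0 ≤ c) (h1 : c ≤ 1) :
    ∃ u : ℕ → ℕ, Filter.Tendsto (fun k => cseq (u k)) Filter.atTop (nhds c) := by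
  have hc : c ∈ closure (Set.range ((↑) : ℚ → ℝ)) := by
    rw [Rat.denseRange_cast.closure_eq]; trivial
  obtain ⟨x, hx_mem, hx_lim⟩ := mem_closure_iff_seq_limit.mp hc
  choose q hq using hx_mem
  refine ⟨fun k => Denumerable.eqv ℚ (q k), ?_⟩
  have heq : ∀ k, cseq (Denumerable.eqv ℚ (q k)) = clamp (x k) := by
    intro k
    rw [cseq, Equiv.symm_apply_apply, hq]
  simp_rw [heq]
  have := (continuous_clamp.tendsto c).comp hx_lim
  rwa [clamp_of_mem h0 h1] at this

lemma subset_spec_S : Complex.ofReal '' Set.Icc (0:ℝ) 2 ⊆ spectrum ℂ Sop := by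
  rintro z ⟨t, ⟨ht0, ht2⟩, rfl⟩
  show t ∈ Complex.ofReal ⁻¹' spectrum ℂ Sop
  have hK : IsClosed (Complex.ofReal ⁻¹' spectrum ℂ Sop) :=
    (spectrum.isClosed _).preimage Complex.continuous_ofReal
  rcases le_total t 1 with ht | ht
  · obtain ⟨u, hu⟩ := cseq_dense (c := 1 - t) (by linarith) (by linarith)
    have hlim : Filter.Tendsto (fun k => 1 - cseq (u k)) Filter.atTop (nhds t) := by
      have := Filter.Tendsto.const_sub 1 hu
      simpa using this
    exact hK.mem_of_tendsto hlim
      (Filter.Eventually.of_forall fun k => by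
        simpa using mem_spec_one_sub (u k))
  · obtain ⟨u, hu⟩ := cseq_dense (c := t - 1) (by linarith) (by linarith)
    have hlim : Filter.Tendsto (fun k => 1 + cseq (u k)) Filter.atTop (nhds t) := by
      have := Filter.Tendsto.const_add 1 hu
      simpa using this
    exact hK.mem_of_tendsto hlim
      (Filter.Eventually.of_forall fun k => by
        simpa using mem_spec_one_add (u k))

lemma spec_S : spectrum ℂ Sop = Complex.ofReal '' Set.Icc (0:ℝ) 2 :=
  le_antisymm spec_S_subset subset_spec_S


lemma quad_image :
    (fun t : ℝ => t ^ 2 - t) '' Set.Icc 0 2 = Set.Icc (-(1/4) : ℝ) 2 := by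
  ext y
  simp only [Set.mem_image, Set.mem_Icc]
  constructor
  · rintro ⟨t, ⟨h0, h2⟩, rfl⟩
    constructor <;> nlinarith [sq_nonneg (t - 1/2)]
  · rintro ⟨h1, h2⟩
    have hy : (0:ℝ) ≤ y + 1/4 := by linarith
    have hs := Real.sq_sqrt hy
    have hs0 := Real.sqrt_nonneg (y + 1/4)
    refine ⟨1/2 + Real.sqrt (y + 1/4), ⟨by linarith, ?_⟩, by nlinarith⟩
    nlinarith

end ProjAux

open ProjAux in
/-- There exist orthogonal projections `P, Q` on `ℓ²(ℕ, ℂ) × ℓ²(ℕ, ℂ)` with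
`σ(PQ + QP) = [-1/4, 2]`. -/
theorem exists_projections_spectrum_anticommutator_eq_Icc :
    ∃ P Q : WithLp 2 (lp (fun _ : ℕ => ℂ) 2 × lp (fun _ : ℕ => ℂ) 2) →L[ℂ]
        WithLp 2 (lp (fun _ : ℕ => ℂ) 2 × lp (fun _ : ℕ => ℂ) 2),
      IsSelfAdjoint P ∧ P * P = P ∧ IsSelfAdjoint Q ∧ Q * Q = Q ∧
      spectrum ℂ (P * Q + Q * P) = Complex.ofReal '' Set.Icc (-(1/4) : ℝ) 2 := by
  refine ⟨Pop, Qop, Pop_sa, Pop_mul_Pop, Qop_sa, Qop_mul_Qop, ?_⟩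
  have hv := vvec_ne_zero' (n := 0) (α := 1) (β := 0) one_ne_zero
  haveI : Nontrivial (Hsp →L[ℂ] Hsp) :=
    ⟨1, 0, fun h => hv (by
      simpa using congrArg (fun T : Hsp →L[ℂ] Hsp => T (vvec 0 1 0)) h)⟩
  have hA : Pop * Qop + Qop * Pop =
      Polynomial.aeval Sop (Polynomial.X ^ 2 - Polynomial.X : Polynomial ℂ) := by
    rw [map_sub, map_pow, Polynomial.aeval_X]
    rw [Sop, sq, add_mul, mul_add, mul_add, Pop_mul_Pop, Qop_mul_Qop]
    abel
  rw [hA, spectrum.map_polynomial_aeval, spec_S, Set.image_image]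
  rw [← quad_image, Set.image_image]
  apply Set.image_congr'
  intro t
  simp only [Polynomial.eval_sub, Polynomial.eval_pow, Polynomial.eval_X]
  push_cast
  ring
end ProjAux
end

section
/- Let K be a complex Hilbert space and let Q₀ be a positive contraction on K with σ(Q₀) = [0, 1]. Set H = K × K, let P be the orthogonal projection P(x, y) = (x, 0), and let Q be the block operator Q(x, y) = ( Q₀x + Q₀^{1/2}(I − Q₀)^{1/2} y , Q₀^{1/2}(I − Q₀)^{1/2} x + (I − Q₀) y ). Then σ(PQ + QP) = [−1/4, 2]. -/
set_option synthInstance.maxHeartbeats 400000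
set_option maxHeartbeats 1000000

open scoped NNReal

lemma himg_aux : (fun x : ℝ => x^2 + x) '' Set.Icc (-1 : ℝ) 1 = Set.Icc (-(1/4) : ℝ) 2 := by
  ext y
  constructor
  · rintro ⟨x, ⟨hx1, hx2⟩, rfl⟩
    refine ⟨?_, ?_⟩
    · show -(1/4) ≤ x^2 + x
      nlinarith [sq_nonneg (x + 1/2)]
    · show x^2 + x ≤ 2
      nlinarith [mul_nonneg (by linarith : (0:ℝ) ≤ 1 - x) (by linarith : (0:ℝ) ≤ x + 1)]
  · rintro ⟨hy1, hy2⟩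
    refine ⟨(-1 + Real.sqrt (1 + 4*y))/2, ⟨?_, ?_⟩, ?_⟩
    · have := Real.sqrt_nonneg (1 + 4*y); linarith
    · have h9 : Real.sqrt (1 + 4*y) ≤ 3 := by
        rw [show (3:ℝ) = Real.sqrt 9 by rw [show (9:ℝ) = 3^2 by norm_num, Real.sqrt_sq]; norm_num]
        apply Real.sqrt_le_sqrt; linarith
      linarith
    · have hsq : Real.sqrt (1 + 4*y) ^ 2 = 1 + 4*y := Real.sq_sqrt (by linarith)
      show ((-1 + Real.sqrt (1 + 4*y))/2)^2 + (-1 + Real.sqrt (1 + 4*y))/2 = y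
      nlinarith

lemma WithLp.equiv_symm_add {p : ENNReal} {V : Type*} [AddCommGroup V] (x y : V) :
    (WithLp.equiv p V).symm (x + y) = (WithLp.equiv p V).symm x + (WithLp.equiv p V).symm y :=
  rfl

lemma WithLp.equiv_symm_sub {p : ENNReal} {V : Type*} [AddCommGroup V] (x y : V) :
    (WithLp.equiv p V).symm (x - y) = (WithLp.equiv p V).symm x - (WithLp.equiv p V).symm y :=
  rfl

lemma WithLp.equiv_symm_neg {p : ENNReal} {V : Type*} [AddCommGroup V] (x : V) :
    (WithLp.equiv p V).symm (-x) = -(WithLp.equiv p V).symm x :=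
  rfl

lemma WithLp.equiv_symm_smul {p : ENNReal} {𝕜 V : Type*} [SMul 𝕜 V] (c : 𝕜) (x : V) :
    (WithLp.equiv p V).symm (c • x) = c • (WithLp.equiv p V).symm x :=
  rfl

lemma real_of_sq_aux {z : ℂ} {s : ℝ} (hs : 0 ≤ s) (h : z^2 = (s:ℂ)) :
    z.im = 0 ∧ z.re^2 = s := by
  have hre : z.re^2 - z.im^2 = s := by
    have := congrArg Complex.re h
    simpa [pow_two, Complex.mul_re] using this
  have him : z.re * z.im = 0 := by
    have := congrArg Complex.im h
    simp [pow_two, Complex.mul_im] at this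
    linarith
  rcases mul_eq_zero.mp him with h0 | h0
  · have h2 : z.im ^ 2 = 0 := by nlinarith
    have h3 : z.im = 0 := sq_eq_zero_iff.mp h2
    exact ⟨h3, by nlinarith⟩
  · exact ⟨h0, by nlinarith⟩

/-- If `Q₀` is a positive contraction on `K` with `σ(Q₀) = [0, 1]`, `P(x, y) = (x, 0)` and
`Q(x, y) = (Q₀x + Q₀^{1/2}(I - Q₀)^{1/2}y, Q₀^{1/2}(I - Q₀)^{1/2}x + (I - Q₀)y)` on `K × K`,
then `σ(PQ + QP) = [-1/4, 2]`. -/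
theorem spectrum_anticommutator_eq_Icc
    {K : Type*} [NormedAddCommGroup K] [InnerProductSpace ℂ K] [CompleteSpace K]
    (Q₀ : K →L[ℂ] K) (hsa : IsSelfAdjoint Q₀) (hpos : 0 ≤ Q₀) (hc : ‖Q₀‖ ≤ 1)
    (hspec : spectrum ℂ Q₀ = Complex.ofReal '' Set.Icc (0 : ℝ) 1)
    (P Q : WithLp 2 (K × K) →L[ℂ] WithLp 2 (K × K))
    (hP : ∀ x y : K,
      P ((WithLp.equiv 2 (K × K)).symm (x, y)) = (WithLp.equiv 2 (K × K)).symm (x, 0))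
    (hQ : ∀ x y : K,
      Q ((WithLp.equiv 2 (K × K)).symm (x, y)) =
        (WithLp.equiv 2 (K × K)).symm
          (Q₀ x + (CFC.sqrt Q₀) ((CFC.sqrt (1 - Q₀)) y),
           (CFC.sqrt Q₀) ((CFC.sqrt (1 - Q₀)) x) + (1 - Q₀) y)) :
    spectrum ℂ (P * Q + Q * P) = Complex.ofReal '' Set.Icc (-(1/4) : ℝ) 2 := by
  -- scalar (CFC) facts about `Q₀`
  have hble : ∀ x ∈ spectrum ℝ≥0 Q₀, x ≤ 1 := by
    intro x hx
    have hx' : ((x : ℝ) : ℂ) ∈ spectrum ℂ Q₀ := by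
      rw [spectrum.mem_iff] at hx ⊢
      rwa [show (algebraMap ℂ (K →L[ℂ] K)) ((x:ℝ):ℂ) = (algebraMap ℝ≥0 (K →L[ℂ] K)) x by
        rw [IsScalarTower.algebraMap_apply ℝ≥0 ℂ (K →L[ℂ] K)]; norm_cast]
    rw [hspec] at hx'
    obtain ⟨t, ht, hts⟩ := hx'
    have hteq : t = (x : ℝ) := by exact_mod_cast hts
    have ht2 := ht.2
    rw [hteq] at ht2
    exact_mod_cast ht2
  have h1Q : (1 - Q₀ : K →L[ℂ] K) = cfc (fun x : ℝ≥0 => 1 - x) Q₀ := by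
    rw [cfc_tsub (fun _ => 1) (fun x => x) Q₀ hble hpos (by fun_prop) (by fun_prop),
      cfc_const_one ℝ≥0 Q₀, cfc_id' ℝ≥0 Q₀]
  have hT : CFC.sqrt (1 - Q₀ : K →L[ℂ] K) = cfc (fun x : ℝ≥0 => NNReal.sqrt (1 - x)) Q₀ := by
    rw [CFC.sqrt_eq_cfc, h1Q, ← cfc_comp NNReal.sqrt (fun x : ℝ≥0 => 1 - x) Q₀]
    rfl
  have hR : CFC.sqrt Q₀ * CFC.sqrt (1 - Q₀ : K →L[ℂ] K)
      = cfc (fun x : ℝ≥0 => NNReal.sqrt x * NNReal.sqrt (1 - x)) Q₀ := by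
    rw [CFC.sqrt_eq_cfc, hT, ← cfc_mul _ _ Q₀]
  have hcomm : Q₀ * (CFC.sqrt Q₀ * CFC.sqrt (1 - Q₀ : K →L[ℂ] K))
      = (CFC.sqrt Q₀ * CFC.sqrt (1 - Q₀)) * Q₀ := by
    have hc' := (cfc_commute_cfc (a := Q₀) (id : ℝ≥0 → ℝ≥0)
      (fun x => NNReal.sqrt x * NNReal.sqrt (1 - x))).eq
    rwa [cfc_id ℝ≥0 Q₀, ← hR] at hc'
  have hmul : Q₀ * (1 - Q₀ : K →L[ℂ] K) = cfc (fun x : ℝ≥0 => x * (1 - x)) Q₀ := by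
    have := cfc_mul (id : ℝ≥0 → ℝ≥0) (fun x : ℝ≥0 => 1 - x) Q₀
    rw [cfc_id ℝ≥0 Q₀, ← h1Q] at this
    exact this.symm
  have hRR : (CFC.sqrt Q₀ * CFC.sqrt (1 - Q₀ : K →L[ℂ] K))
      * (CFC.sqrt Q₀ * CFC.sqrt (1 - Q₀)) = Q₀ * (1 - Q₀) := by
    rw [hR, ← cfc_mul _ _ Q₀, hmul]
    apply cfc_congr
    intro x hx
    simp only []
    rw [mul_mul_mul_comm, NNReal.mul_self_sqrt, NNReal.mul_self_sqrt]
  -- abbreviate the off-diagonal operator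
  set R : K →L[ℂ] K := CFC.sqrt Q₀ * CFC.sqrt (1 - Q₀) with hRdef
  have hRR' : R * R = Q₀ - Q₀ * Q₀ := by
    rw [hRdef, hRR, mul_sub, mul_one]
  have hcomm' : Q₀ * R = R * Q₀ := hcomm
  have hQ' : ∀ x y : K,
      Q ((WithLp.equiv 2 (K × K)).symm (x, y)) =
        (WithLp.equiv 2 (K × K)).symm (Q₀ x + R y, R x + (1 - Q₀) y) := by
    intro x y
    simpa [hRdef, ContinuousLinearMap.mul_apply] using hQ x y
  clear hQ hRR hcomm hmul hT h1Q hble hsa hc hRdef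
  -- the operator framework on `WithLp 2 (K × K)`
  set eqv := WithLp.equiv 2 (K × K) with heqv
  set e := WithLp.prodContinuousLinearEquiv 2 ℂ K K with he
  have hecoe : ∀ w, e w = eqv w := fun w => rfl
  have hesymm : ∀ w, e.symm w = eqv.symm w := fun w => rfl
  set D : WithLp 2 (K × K) →L[ℂ] WithLp 2 (K × K) :=
    (e.symm : (K × K) →L[ℂ] WithLp 2 (K × K)).comp
      ((Q₀.prodMap Q₀).comp (e : WithLp 2 (K × K) →L[ℂ] (K × K))) with hDdef
  have hD : ∀ x y : K, D (eqv.symm (x, y)) = eqv.symm (Q₀ x, Q₀ y) := by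
    intro x y
    simp only [hDdef, ContinuousLinearMap.comp_apply, ContinuousLinearEquiv.coe_coe,
      hecoe, hesymm, Equiv.apply_symm_apply, ContinuousLinearMap.coe_prodMap', Prod.map]
  have hA : ∀ x y : K, (P * Q + Q * P) (eqv.symm (x, y))
      = eqv.symm (Q₀ x + Q₀ x + R y, R x) := by
    intro x y
    have h1 : (P * Q) (eqv.symm (x, y)) = eqv.symm (Q₀ x + R y, 0) := by
      rw [ContinuousLinearMap.mul_apply, hQ', hP]
    have h2 : (Q * P) (eqv.symm (x, y)) = eqv.symm (Q₀ x, R x) := by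
      rw [ContinuousLinearMap.mul_apply, hP, hQ']
      simp
    rw [ContinuousLinearMap.add_apply, h1, h2, ← WithLp.equiv_symm_add]
    congr 1
    rw [Prod.mk_add_mk, Prod.mk.injEq]
    constructor
    · abel
    · abel
  set B : WithLp 2 (K × K) →L[ℂ] WithLp 2 (K × K) := P * Q + Q * P - D with hBdef
  have hB : ∀ x y : K, B (eqv.symm (x, y)) = eqv.symm (Q₀ x + R y, R x - Q₀ y) := by
    intro x y
    rw [hBdef, ContinuousLinearMap.sub_apply, hA, hD, ← WithLp.equiv_symm_sub]
    congr 1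
    rw [Prod.mk_sub_mk, Prod.mk.injEq]
    constructor
    · abel
    · abel
  have hRRv : ∀ v, R (R v) = Q₀ v - Q₀ (Q₀ v) := fun v => by
    simpa [ContinuousLinearMap.mul_apply, ContinuousLinearMap.sub_apply]
      using DFunLike.congr_fun hRR' v
  have hcv : ∀ v, Q₀ (R v) = R (Q₀ v) := fun v => by
    simpa [ContinuousLinearMap.mul_apply] using DFunLike.congr_fun hcomm' v
  have hBB : B * B = D := by
    ext z
    have hz : z = eqv.symm (eqv z) := (Equiv.symm_apply_apply eqv z).symm
    rw [ContinuousLinearMap.mul_apply, hz, hB (eqv z).1 (eqv z).2, hB, hD]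
    congr 1
    rw [Prod.mk.injEq]
    constructor
    · simp only [map_add, map_sub, hRRv, hcv]; abel
    · simp only [map_add, map_sub, hRRv, hcv]; abel
  -- symmetry of the spectrum of `B`
  set V : WithLp 2 (K × K) →L[ℂ] WithLp 2 (K × K) :=
    (e.symm : (K × K) →L[ℂ] WithLp 2 (K × K)).comp
      (((ContinuousLinearMap.snd ℂ K K).prod (-(ContinuousLinearMap.fst ℂ K K))).comp
        (e : WithLp 2 (K × K) →L[ℂ] (K × K))) with hVdef
  have hV : ∀ x y : K, V (eqv.symm (x, y)) = eqv.symm (y, -x) := by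
    intro x y
    simp only [hVdef, ContinuousLinearMap.comp_apply, ContinuousLinearEquiv.coe_coe,
      hecoe, hesymm, Equiv.apply_symm_apply, ContinuousLinearMap.prod_apply,
      ContinuousLinearMap.neg_apply, ContinuousLinearMap.coe_snd', ContinuousLinearMap.coe_fst']
  have hVV : V * V = -1 := by
    ext z
    have hz : z = eqv.symm (eqv z) := (Equiv.symm_apply_apply eqv z).symm
    rw [ContinuousLinearMap.mul_apply, hz, hV (eqv z).1 (eqv z).2, hV,
      ContinuousLinearMap.neg_apply, ContinuousLinearMap.one_apply, hz,
      ← WithLp.equiv_symm_neg]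
    congr 1
  have hVBV : V * B * (-V) = -B := by
    have key : ∀ x y : K, (V * B * (-V)) (eqv.symm (x, y)) = (-B) (eqv.symm (x, y)) := by
      intro x y
      have h1 : (-V) (eqv.symm (x, y)) = eqv.symm (-y, x) := by
        rw [ContinuousLinearMap.neg_apply, hV, ← WithLp.equiv_symm_neg, Prod.neg_mk, neg_neg]
      rw [ContinuousLinearMap.mul_apply, ContinuousLinearMap.mul_apply, h1, hB, hV,
        ContinuousLinearMap.neg_apply, hB, ← WithLp.equiv_symm_neg, Prod.neg_mk]
      congr 1
      rw [Prod.mk.injEq]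
      constructor
      · simp only [map_neg, map_sub, map_add]; abel
      · simp only [map_neg, map_sub, map_add]; abel
    ext z
    have hz : z = eqv.symm (eqv z) := (Equiv.symm_apply_apply eqv z).symm
    rw [hz]
    exact key (eqv z).1 (eqv z).2
  have hBsymm : spectrum ℂ (-B) = spectrum ℂ B := by
    have hUu : (V * (-V) : WithLp 2 (K × K) →L[ℂ] WithLp 2 (K × K)) = 1 :=
      (mul_neg V V).trans (by rw [hVV, neg_neg])
    have hUu' : ((-V) * V : WithLp 2 (K × K) →L[ℂ] WithLp 2 (K × K)) = 1 :=
      (neg_mul V V).trans (by rw [hVV, neg_neg])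
    have h := spectrum.units_conjugate (R := ℂ) (u := ⟨V, -V, hUu, hUu'⟩) (a := B)
    rw [show ((⟨V, -V, hUu, hUu'⟩ : (WithLp 2 (K × K) →L[ℂ] WithLp 2 (K × K))ˣ)⁻¹ : (WithLp 2 (K × K) →L[ℂ] WithLp 2 (K × K))ˣ) = ⟨-V, V, hUu', hUu⟩ from rfl] at h
    rw [show (((⟨V, -V, hUu, hUu'⟩ : (WithLp 2 (K × K) →L[ℂ] WithLp 2 (K × K))ˣ)) : (WithLp 2 (K × K) →L[ℂ] WithLp 2 (K × K))) = V from rfl] at h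
    rw [show (((⟨-V, V, hUu', hUu⟩ : (WithLp 2 (K × K) →L[ℂ] WithLp 2 (K × K))ˣ)) : (WithLp 2 (K × K) →L[ℂ] WithLp 2 (K × K))) = -V from rfl] at h
    rw [hVBV] at h
    exact h
  -- the spectrum of the block-diagonal operator `D`
  have hDspec : spectrum ℂ D = spectrum ℂ Q₀ := by
    ext z
    rw [spectrum.mem_iff, spectrum.mem_iff, not_iff_not]
    have hN : ∀ x y : K, (algebraMap ℂ (WithLp 2 (K × K) →L[ℂ] WithLp 2 (K × K)) z - D)
        (eqv.symm (x, y)) = eqv.symm (z • x - Q₀ x, z • y - Q₀ y) := by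
      intro x y
      rw [ContinuousLinearMap.sub_apply, Algebra.algebraMap_eq_smul_one,
        ContinuousLinearMap.smul_apply, ContinuousLinearMap.one_apply, hD,
        ← WithLp.equiv_symm_smul, ← WithLp.equiv_symm_sub, Prod.smul_mk, Prod.mk_sub_mk]
    have hNq : ∀ x : K, (algebraMap ℂ (K →L[ℂ] K) z - Q₀) x = z • x - Q₀ x := by
      intro x
      rw [ContinuousLinearMap.sub_apply, Algebra.algebraMap_eq_smul_one,
        ContinuousLinearMap.smul_apply, ContinuousLinearMap.one_apply]
    constructor
    · rintro ⟨u, hu⟩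
      set C : K →L[ℂ] K :=
        ((ContinuousLinearMap.fst ℂ K K).comp ((e : WithLp 2 (K × K) →L[ℂ] (K × K)).comp
          ((↑u⁻¹ : WithLp 2 (K × K) →L[ℂ] WithLp 2 (K × K)).comp
            ((e.symm : (K × K) →L[ℂ] WithLp 2 (K × K)).comp
              (ContinuousLinearMap.inl ℂ K K))))) with hCdef
      have hMN : ∀ w, (↑u⁻¹ : WithLp 2 (K × K) →L[ℂ] WithLp 2 (K × K))
          ((algebraMap ℂ _ z - D) w) = w := by
        intro w
        rw [← hu, ← ContinuousLinearMap.mul_apply, ← Units.val_mul, inv_mul_cancel u,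
          Units.val_one, ContinuousLinearMap.one_apply]
      have hNM : ∀ w, (algebraMap ℂ _ z - D)
          ((↑u⁻¹ : WithLp 2 (K × K) →L[ℂ] WithLp 2 (K × K)) w) = w := by
        intro w
        rw [← hu, ← ContinuousLinearMap.mul_apply, ← Units.val_mul, mul_inv_cancel u,
          Units.val_one, ContinuousLinearMap.one_apply]
      have hCapp : ∀ x : K, C x
          = (e ((↑u⁻¹ : WithLp 2 (K × K) →L[ℂ] WithLp 2 (K × K)) (eqv.symm (x, 0)))).1 := by
        intro x
        simp only [hCdef, ContinuousLinearMap.comp_apply, ContinuousLinearEquiv.coe_coe,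
          ContinuousLinearMap.coe_fst', ContinuousLinearMap.inl_apply, hesymm]
      have hleft : ∀ x : K, C ((algebraMap ℂ (K →L[ℂ] K) z - Q₀) x) = x := by
        intro x
        rw [hNq, hCapp]
        have : eqv.symm (z • x - Q₀ x, 0) = (algebraMap ℂ _ z - D) (eqv.symm (x, 0)) := by
          rw [hN]; simp
        rw [this, hMN, hecoe, Equiv.apply_symm_apply]
      have hright : ∀ x : K, (algebraMap ℂ (K →L[ℂ] K) z - Q₀) (C x) = x := by
        intro x
        have h1 : (algebraMap ℂ _ z - D)
            ((↑u⁻¹ : WithLp 2 (K × K) →L[ℂ] WithLp 2 (K × K)) (eqv.symm (x, 0)))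
            = eqv.symm (x, 0) := hNM _
        rw [← Equiv.symm_apply_apply eqv
          ((↑u⁻¹ : WithLp 2 (K × K) →L[ℂ] WithLp 2 (K × K)) (eqv.symm (x, 0))), hN] at h1
        have h3 := eqv.symm.injective h1
        have h4 := congrArg Prod.fst h3
        rw [hNq, hCapp, hecoe]
        exact h4
      exact ⟨⟨algebraMap ℂ (K →L[ℂ] K) z - Q₀, C,
        ContinuousLinearMap.ext hright, ContinuousLinearMap.ext hleft⟩, rfl⟩
    · rintro ⟨v, hv⟩
      set C : K →L[ℂ] K := (↑v⁻¹ : K →L[ℂ] K) with hCdef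
      have hCN : ∀ x, C ((algebraMap ℂ (K →L[ℂ] K) z - Q₀) x) = x := by
        intro x
        rw [hCdef, ← hv, ← ContinuousLinearMap.mul_apply, ← Units.val_mul, inv_mul_cancel v,
          Units.val_one, ContinuousLinearMap.one_apply]
      have hNC : ∀ x, (algebraMap ℂ (K →L[ℂ] K) z - Q₀) (C x) = x := by
        intro x
        rw [hCdef, ← hv, ← ContinuousLinearMap.mul_apply, ← Units.val_mul, mul_inv_cancel v,
          Units.val_one, ContinuousLinearMap.one_apply]
      set M : WithLp 2 (K × K) →L[ℂ] WithLp 2 (K × K) :=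
        (e.symm : (K × K) →L[ℂ] WithLp 2 (K × K)).comp
          ((C.prodMap C).comp (e : WithLp 2 (K × K) →L[ℂ] (K × K))) with hMdef
      have hM : ∀ x y : K, M (eqv.symm (x, y)) = eqv.symm (C x, C y) := by
        intro x y
        simp only [hMdef, ContinuousLinearMap.comp_apply, ContinuousLinearEquiv.coe_coe,
          hecoe, hesymm, Equiv.apply_symm_apply, ContinuousLinearMap.coe_prodMap', Prod.map]
      have h1 : M * (algebraMap ℂ _ z - D) = 1 := by
        ext w
        have hw : w = eqv.symm (eqv w) := (Equiv.symm_apply_apply eqv w).symm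
        rw [ContinuousLinearMap.mul_apply, hw, hN (eqv w).1 (eqv w).2, hM,
          ← hNq, ← hNq, hCN, hCN, ContinuousLinearMap.one_apply]
      have h2 : (algebraMap ℂ _ z - D) * M = 1 := by
        ext w
        have hw : w = eqv.symm (eqv w) := (Equiv.symm_apply_apply eqv w).symm
        rw [ContinuousLinearMap.mul_apply, hw, hM (eqv w).1 (eqv w).2, hN,
          ← hNq, ← hNq, hNC, hNC, ContinuousLinearMap.one_apply]
      exact ⟨⟨algebraMap ℂ _ z - D, M, h2, h1⟩, rfl⟩
  -- spectral mapping
  have hAeq : P * Q + Q * P = B * B + B := by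
    rw [hBB, hBdef]
    abel
  have hsqB : (fun k : ℂ => k^2) '' spectrum ℂ B = Complex.ofReal '' Set.Icc (0:ℝ) 1 := by
    have h := spectrum.map_polynomial_aeval_of_degree_pos (𝕜 := ℂ) B
      (Polynomial.X^2) (by rw [Polynomial.degree_X_pow]; norm_num)
    rw [map_pow, Polynomial.aeval_X, pow_two, hBB, hDspec, hspec] at h
    simp only [Polynomial.eval_pow, Polynomial.eval_X] at h
    exact h.symm
  have hAspec : spectrum ℂ (P * Q + Q * P) = (fun k : ℂ => k^2 + k) '' spectrum ℂ B := by
    have hdeg : 0 < (Polynomial.X^2 + Polynomial.X : Polynomial ℂ).degree := by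
      have h2 : (Polynomial.X^2 + Polynomial.X : Polynomial ℂ).degree = 2 := by
        compute_degree!
      rw [h2]
      norm_num
    have h := spectrum.map_polynomial_aeval_of_degree_pos (𝕜 := ℂ) B
      (Polynomial.X^2 + Polynomial.X) hdeg
    rw [map_add, map_pow, Polynomial.aeval_X, pow_two, ← hAeq] at h
    simp only [Polynomial.eval_add, Polynomial.eval_pow, Polynomial.eval_X] at h
    exact h
  -- determine the spectrum of `B`
  have hnegB : ∀ w ∈ spectrum ℂ B, -w ∈ spectrum ℂ B := by
    intro w hw
    have h : -spectrum ℂ B = spectrum ℂ B := (spectrum.neg_eq B).trans hBsymm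
    rw [← h]
    exact Set.neg_mem_neg.mpr hw
  have hBchar : spectrum ℂ B = Complex.ofReal '' Set.Icc (-1:ℝ) 1 := by
    ext z
    constructor
    · intro hz
      have hz2 : z^2 ∈ Complex.ofReal '' Set.Icc (0:ℝ) 1 := by
        rw [← hsqB]; exact ⟨z, hz, rfl⟩
      obtain ⟨s, hs, hzs⟩ := hz2
      obtain ⟨him, hre⟩ := real_of_sq_aux hs.1 hzs.symm
      refine ⟨z.re, ⟨?_, ?_⟩, ?_⟩
      · nlinarith [hs.2, hre]
      · nlinarith [hs.2, hre]
      · apply Complex.ext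
        · simp
        · simp [him]
    · rintro ⟨t, ⟨ht1, ht2⟩, rfl⟩
      have hts : ((t^2 : ℝ) : ℂ) ∈ Complex.ofReal '' Set.Icc (0:ℝ) 1 :=
        ⟨t^2, ⟨sq_nonneg t, by nlinarith⟩, rfl⟩
      rw [← hsqB] at hts
      obtain ⟨z, hz, hzz⟩ := hts
      obtain ⟨him, hre⟩ := real_of_sq_aux (sq_nonneg t) hzz
      have hz' : z = ((z.re : ℝ) : ℂ) := by
        apply Complex.ext
        · simp
        · simp [him]
      have hcases : z.re = t ∨ z.re = -t := by
        have hfac : (z.re - t) * (z.re + t) = 0 := by nlinarith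
        rcases mul_eq_zero.mp hfac with h0 | h0
        · left; linarith
        · right; linarith
      rcases hcases with h0 | h0
      · rw [show ((t:ℝ):ℂ) = z by rw [hz', h0]]
        exact hz
      · have : ((t:ℝ):ℂ) = -z := by
          rw [hz', h0]
          push_cast
          ring
        rw [this]
        exact hnegB z hz
  -- conclusion
  rw [hAspec, hBchar]
  ext w
  constructor
  · rintro ⟨k, ⟨t, ⟨ht1, ht2⟩, rfl⟩, rfl⟩
    refine ⟨t^2 + t, ⟨?_, ?_⟩, ?_⟩
    · nlinarith [sq_nonneg (t + 1/2)]
    · nlinarith [mul_nonneg (by linarith : (0:ℝ) ≤ 1 - t) (by linarith : (0:ℝ) ≤ t + 1)]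
    · push_cast
      ring
  · rintro ⟨s, hs, rfl⟩
    have hs' : s ∈ (fun x : ℝ => x^2 + x) '' Set.Icc (-1:ℝ) 1 := by
      rw [himg_aux]; exact hs
    obtain ⟨x, hx, hxs⟩ := hs'
    refine ⟨(x:ℂ), ⟨x, hx, rfl⟩, ?_⟩
    rw [← hxs]
    push_cast
    ring
end

section
/- Let P and Q be orthogonal projections on a nontrivial complex Hilbert space H. Then the supremum of the set of real parts of σ(PQ + QP) equals ‖PQ‖² + ‖PQ‖; in particular ‖PQ‖² + ‖PQ‖ ∈ σ(PQ + QP). -/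
set_option synthInstance.maxHeartbeats 400000
set_option maxHeartbeats 1000000

open scoped InnerProductSpace

section Helpers

variable {H : Type*} [NormedAddCommGroup H] [InnerProductSpace ℂ H] [CompleteSpace H]

lemma quad_re_sub (T : H →L[ℂ] H) (m : ℝ) (x : H) :
    Complex.re (inner ℂ ((algebraMap ℝ (H →L[ℂ] H) m - T) x) x : ℂ)
      = m * ‖x‖ ^ 2 - Complex.re (inner ℂ (T x) x : ℂ) := by
  have halg : algebraMap ℝ (H →L[ℂ] H) m = algebraMap ℂ (H →L[ℂ] H) ((m : ℂ)) :=
    IsScalarTower.algebraMap_apply ℝ ℂ (H →L[ℂ] H) m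
  have happly : (algebraMap ℝ (H →L[ℂ] H) m - T) x = (m : ℂ) • x - T x := by
    rw [halg, Algebra.algebraMap_eq_smul_one]
    simp
  have h1 : (inner ℂ ((algebraMap ℝ (H →L[ℂ] H) m - T) x) x : ℂ)
      = (m : ℂ) * (inner ℂ x x : ℂ) - inner ℂ (T x) x := by
    rw [happly, inner_sub_left, inner_smul_left, Complex.conj_ofReal]
  have hself : Complex.re (inner ℂ x x : ℂ) = ‖x‖ ^ 2 := by
    simpa using inner_self_eq_norm_sq (𝕜 := ℂ) x
  rw [h1, Complex.sub_re, Complex.re_ofReal_mul, hself]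

lemma sa_algebraMap_sub (T : H →L[ℂ] H) (hT : IsSelfAdjoint T) (m : ℝ) :
    IsSelfAdjoint (algebraMap ℝ (H →L[ℂ] H) m - T) := by
  exact IsSelfAdjoint.algebraMap (H →L[ℂ] H) (.all m) |>.sub hT

/-- Upper bound on the real parts of the spectrum from the quadratic form. -/
lemma spec_re_le_of_quad (T : H →L[ℂ] H) (hT : IsSelfAdjoint T) (m : ℝ)
    (h : ∀ y : H, Complex.re (inner ℂ (T y) y : ℂ) ≤ m * ‖y‖ ^ 2) :
    ∀ μ ∈ spectrum ℂ T, μ.re ≤ m := by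
  intro μ hμ
  have halg : algebraMap ℝ (H →L[ℂ] H) m = algebraMap ℂ (H →L[ℂ] H) ((m : ℂ)) :=
    IsScalarTower.algebraMap_apply ℝ ℂ (H →L[ℂ] H) m
  set T' : H →L[ℂ] H := algebraMap ℝ (H →L[ℂ] H) m - T with hT'def
  have hT'sa : IsSelfAdjoint T' := sa_algebraMap_sub T hT m
  have hpos : T'.IsPositive := by
    refine ⟨(ContinuousLinearMap.isSelfAdjoint_iff_isSymmetric).mp hT'sa, fun x => ?_⟩
    have h2 := quad_re_sub T m x
    rw [ContinuousLinearMap.reApplyInnerSelf_apply]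
    rw [show (RCLike.re (⟪T' x, x⟫_ℂ) : ℝ) = Complex.re (⟪T' x, x⟫_ℂ) from rfl, hT'def, h2]
    have := h x
    linarith
  have h0 : (0 : H →L[ℂ] H) ≤ T' := (ContinuousLinearMap.nonneg_iff_isPositive T').mpr hpos
  have hμ' : μ = (μ.re : ℂ) := hT.mem_spectrum_eq_re hμ
  have hmem : ((m - μ.re : ℝ) : ℂ) ∈ spectrum ℂ T' := by
    have h3 : ((m - μ.re : ℝ) : ℂ) = (m : ℂ) - μ := by
      conv_rhs => rw [hμ']
      push_cast
      ring
    rw [h3, hT'def, halg, ← spectrum.singleton_sub_eq]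
    exact Set.sub_mem_sub rfl hμ
  have hmemR : (m - μ.re) ∈ spectrum ℝ T' := by
    rw [← spectrum.algebraMap_mem_iff ℂ]
    simpa using hmem
  have := spectrum_nonneg_of_nonneg h0 hmemR
  linarith

/-- Lower bound on the real parts of the spectrum from the quadratic form. -/
lemma spec_re_ge_of_quad (T : H →L[ℂ] H) (hT : IsSelfAdjoint T) (m : ℝ)
    (h : ∀ y : H, m * ‖y‖ ^ 2 ≤ Complex.re (inner ℂ (T y) y : ℂ)) :
    ∀ μ ∈ spectrum ℂ T, m ≤ μ.re := by
  intro μ hμ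
  have hneg : -μ ∈ spectrum ℂ (-T) := by
    rw [← spectrum.neg_eq]
    exact Set.neg_mem_neg.mpr hμ
  have := spec_re_le_of_quad (-T) hT.neg (-m) (fun y => by
    have := h y
    simp only [ContinuousLinearMap.neg_apply, inner_neg_left, Complex.neg_re]
    linarith) (-μ) hneg
  simp only [Complex.neg_re] at this
  linarith

/-- Quadratic form bound from a bound on the real parts of the spectrum. -/
lemma quad_le_of_spec_re (T : H →L[ℂ] H) (hT : IsSelfAdjoint T) (m : ℝ)
    (h : ∀ μ ∈ spectrum ℂ T, μ.re ≤ m) :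
    ∀ y : H, Complex.re (inner ℂ (T y) y : ℂ) ≤ m * ‖y‖ ^ 2 := by
  have halg : algebraMap ℝ (H →L[ℂ] H) m = algebraMap ℂ (H →L[ℂ] H) ((m : ℂ)) :=
    IsScalarTower.algebraMap_apply ℝ ℂ (H →L[ℂ] H) m
  set T' : H →L[ℂ] H := algebraMap ℝ (H →L[ℂ] H) m - T with hT'def
  have hT'sa : IsSelfAdjoint T' := sa_algebraMap_sub T hT m
  have hspec : ∀ x ∈ spectrum ℝ T', 0 ≤ x := by
    intro x hx
    have hx' : ((x : ℝ) : ℂ) ∈ spectrum ℂ T' := by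
      rw [show ((x : ℝ) : ℂ) = algebraMap ℝ ℂ x from rfl, spectrum.algebraMap_mem_iff]
      exact hx
    rw [hT'def, halg, ← spectrum.singleton_sub_eq] at hx'
    obtain ⟨a, ha, b, hb, hab⟩ := Set.mem_sub.mp hx'
    rw [Set.mem_singleton_iff] at ha
    subst ha
    have hb' : b = (b.re : ℂ) := hT.mem_spectrum_eq_re hb
    have hxval : (x : ℝ) = m - b.re := by
      have := congrArg Complex.re hab
      simp only [Complex.sub_re, Complex.ofReal_re] at this
      exact this.symm
    have := h b hb
    linarith
  have h0 : (0 : H →L[ℂ] H) ≤ T' :=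
    (StarOrderedRing.nonneg_iff_spectrum_nonneg (R := ℝ) T' hT'sa).mpr hspec
  have hpos : T'.IsPositive := (ContinuousLinearMap.nonneg_iff_isPositive T').mp h0
  intro y
  have := (RCLike.nonneg_iff.mp (hpos.inner_nonneg_left y)).1
  rw [show (RCLike.re (⟪T' y, y⟫_ℂ) : ℝ) = Complex.re (⟪T' y, y⟫_ℂ) from rfl, hT'def,
    quad_re_sub T m y] at this
  linarith

end Helpers

/-- For orthogonal projections `P, Q` on a nontrivial complex Hilbert space,
`sup { Re μ : μ ∈ σ(PQ + QP) } = ‖PQ‖² + ‖PQ‖`, and this value lies in `σ(PQ + QP)`. -/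
theorem sSup_re_spectrum_anticommutator
    {H : Type*} [NormedAddCommGroup H] [InnerProductSpace ℂ H] [CompleteSpace H]
    [Nontrivial H]
    (P Q : H →L[ℂ] H) (hP : IsSelfAdjoint P) (hP2 : P * P = P)
    (hQ : IsSelfAdjoint Q) (hQ2 : Q * Q = Q) :
    sSup (Complex.re '' spectrum ℂ (P * Q + Q * P)) = ‖P * Q‖ ^ 2 + ‖P * Q‖ ∧
    ((‖P * Q‖ ^ 2 + ‖P * Q‖ : ℝ) : ℂ) ∈ spectrum ℂ (P * Q + Q * P) := by
  haveI : Nontrivial (H →L[ℂ] H) := by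
    obtain ⟨x, hx⟩ := exists_ne (0 : H)
    exact ⟨1, 0, fun h => hx (by simpa using congrArg (fun T : H →L[ℂ] H => T x) h)⟩
  set t := ‖P * Q‖ with ht
  have htn : 0 ≤ t := norm_nonneg _
  have hPsym := (ContinuousLinearMap.isSelfAdjoint_iff_isSymmetric).mp hP
  have hQsym := (ContinuousLinearMap.isSelfAdjoint_iff_isSymmetric).mp hQ
  have hPP : ∀ x : H, P (P x) = P x := fun x => by
    rw [← ContinuousLinearMap.mul_apply, hP2]
  have hQQ : ∀ x : H, Q (Q x) = Q x := fun x => by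
    rw [← ContinuousLinearMap.mul_apply, hQ2]
  have hPquad : ∀ y : H, Complex.re ⟪P y, y⟫_ℂ = ‖P y‖ ^ 2 := fun y => by
    have h1 : ⟪P y, y⟫_ℂ = ⟪P y, P y⟫_ℂ := by
      conv_lhs => rw [← hPP y]
      exact hPsym (P y) y
    rw [h1]
    simpa using inner_self_eq_norm_sq (𝕜 := ℂ) (P y)
  have hQquad : ∀ y : H, Complex.re ⟪Q y, y⟫_ℂ = ‖Q y‖ ^ 2 := fun y => by
    have h1 : ⟪Q y, y⟫_ℂ = ⟪Q y, Q y⟫_ℂ := by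
      conv_lhs => rw [← hQQ y]
      exact hQsym (Q y) y
    rw [h1]
    simpa using inner_self_eq_norm_sq (𝕜 := ℂ) (Q y)
  set S : H →L[ℂ] H := P + Q with hSdef
  have hSsa : IsSelfAdjoint S := hP.add hQ
  have hSquad : ∀ y : H, Complex.re ⟪S y, y⟫_ℂ = ‖P y‖ ^ 2 + ‖Q y‖ ^ 2 := fun y => by
    have h1 : ⟪S y, y⟫_ℂ = ⟪P y, y⟫_ℂ + ⟪Q y, y⟫_ℂ := by
      rw [hSdef]
      simp [ContinuousLinearMap.add_apply, inner_add_left]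
    rw [h1, Complex.add_re, hPquad, hQquad]
  -- spectral mapping setup
  set p : Polynomial ℂ := Polynomial.X ^ 2 - Polynomial.X with hpdef
  have hSA : Polynomial.aeval S p = P * Q + Q * P := by
    have h1 : Polynomial.aeval S p = S ^ 2 - S := by
      rw [hpdef]
      simp
    rw [h1, hSdef]
    have h2 : (P + Q) ^ 2 = P * P + (P * Q + Q * P) + Q * Q := by
      rw [sq, add_mul, mul_add, mul_add]
      abel
    rw [h2, hP2, hQ2]
    abel
  have hmap : spectrum ℂ (P * Q + Q * P) = (fun k : ℂ => k ^ 2 - k) '' spectrum ℂ S := by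
    have h3 := spectrum.map_polynomial_aeval S p
    rw [hSA] at h3
    rw [h3]
    congr 1
    funext k
    rw [hpdef]
    simp
  -- quadratic form upper bound for S
  have hub : ∀ y : H, Complex.re ⟪S y, y⟫_ℂ ≤ (1 + t) * ‖y‖ ^ 2 := by
    intro y
    rw [hSquad]
    set a := ‖P y‖ with hadef
    set b := ‖Q y‖ with hbdef
    have ha : 0 ≤ a := norm_nonneg _
    have hb : 0 ≤ b := norm_nonneg _
    have hy : 0 ≤ ‖y‖ := norm_nonneg _
    have hsum : a ^ 2 + b ^ 2 ≤ ‖P y + Q y‖ * ‖y‖ := by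
      have h1 : Complex.re ⟪P y + Q y, y⟫_ℂ = a ^ 2 + b ^ 2 := by
        rw [inner_add_left, Complex.add_re, hPquad, hQquad]
      have h2 : Complex.re ⟪P y + Q y, y⟫_ℂ ≤ ‖P y + Q y‖ * ‖y‖ := by
        refine le_trans ?_ (norm_inner_le_norm (𝕜 := ℂ) _ _)
        exact RCLike.re_le_norm (⟪P y + Q y, y⟫_ℂ)
      linarith
    have hcross : Complex.re ⟪P y, Q y⟫_ℂ ≤ t * (a * b) := by
      have h1 : ⟪P y, Q y⟫_ℂ = ⟪P y, (P * Q) (Q y)⟫_ℂ := by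
        have e1 : ⟪P y, Q y⟫_ℂ = ⟪P y, P (Q y)⟫_ℂ := by
          conv_lhs => rw [← hPP y]
          exact hPsym (P y) (Q y)
        have e2 : P (Q y) = P (Q (Q y)) := by rw [hQQ]
        rw [e1, e2]
        conv_rhs => rw [ContinuousLinearMap.mul_apply]
      have h2 : Complex.re ⟪P y, (P * Q) (Q y)⟫_ℂ ≤ ‖P y‖ * ‖(P * Q) (Q y)‖ := by
        refine le_trans ?_ (norm_inner_le_norm (𝕜 := ℂ) _ _)
        simpa using RCLike.re_le_norm (⟪P y, (P * Q) (Q y)⟫_ℂ)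
      have h3 : ‖(P * Q) (Q y)‖ ≤ t * b := by
        simpa [ht, hbdef] using (P * Q).le_opNorm (Q y)
      rw [h1]
      calc Complex.re ⟪P y, (P * Q) (Q y)⟫_ℂ ≤ ‖P y‖ * ‖(P * Q) (Q y)‖ := h2
        _ ≤ a * (t * b) := by
            exact mul_le_mul_of_nonneg_left h3 ha
        _ = t * (a * b) := by ring
    have hns : ‖P y + Q y‖ ^ 2 = a ^ 2 + 2 * Complex.re ⟪P y, Q y⟫_ℂ + b ^ 2 := by
      simpa using norm_add_sq (𝕜 := ℂ) (P y) (Q y)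
    by_cases hu : a ^ 2 + b ^ 2 = 0
    · have hpos : (0:ℝ) ≤ (1 + t) * ‖y‖ ^ 2 := by positivity
      linarith
    · have hupos : 0 < a ^ 2 + b ^ 2 := lt_of_le_of_ne (by positivity) (Ne.symm hu)
      have hsq : (a ^ 2 + b ^ 2) * (a ^ 2 + b ^ 2) ≤ (a ^ 2 + b ^ 2) * ((1 + t) * ‖y‖ ^ 2) := by
        have h4 : (a ^ 2 + b ^ 2) * (a ^ 2 + b ^ 2) ≤ (‖P y + Q y‖ * ‖y‖) * (‖P y + Q y‖ * ‖y‖) :=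
          mul_self_le_mul_self (by positivity) hsum
        nlinarith [sq_nonneg (a - b), sq_nonneg ‖y‖, mul_le_mul_of_nonneg_right hcross (sq_nonneg ‖y‖),
          mul_le_mul_of_nonneg_right (show 2 * (a * b) ≤ a ^ 2 + b ^ 2 by nlinarith [sq_nonneg (a - b)])
            (mul_nonneg htn (sq_nonneg ‖y‖))]
      exact le_of_mul_le_mul_left hsq hupos
  have hubspec : ∀ μ ∈ spectrum ℂ S, μ.re ≤ 1 + t := spec_re_le_of_quad S hSsa (1 + t) hub
  have hlbspec : ∀ μ ∈ spectrum ℂ S, 0 ≤ μ.re :=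
    spec_re_ge_of_quad S hSsa 0 (fun y => by
      rw [hSquad y, zero_mul]
      positivity)
  by_cases ht0 : t = 0
  · -- trivial case : P * Q = 0
    have hPQ0 : P * Q = 0 := norm_eq_zero.mp (by rw [← ht]; exact ht0)
    have hQP0 : Q * P = 0 := by
      have h1 : Q * P = star (P * Q) := by rw [star_mul, hP.star_eq, hQ.star_eq]
      rw [h1, hPQ0, star_zero]
    rw [hPQ0, hQP0, add_zero, spectrum.zero_eq, ht0]
    constructor
    · rw [Set.image_singleton]
      norm_num
    · norm_num
  · have htpos : 0 < t := lt_of_le_of_ne htn (Ne.symm ht0)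
    have hScompact : IsCompact (spectrum ℂ S) := spectrum.isCompact S
    have hSne : (spectrum ℂ S).Nonempty := spectrum.nonempty S
    have himC : IsCompact (Complex.re '' spectrum ℂ S) := hScompact.image Complex.continuous_re
    have himne : (Complex.re '' spectrum ℂ S).Nonempty := hSne.image _
    have hbddS : BddAbove (Complex.re '' spectrum ℂ S) := himC.bddAbove
    set M := sSup (Complex.re '' spectrum ℂ S) with hMdef
    have hMub : M ≤ 1 + t := csSup_le himne (by rintro - ⟨μ, hμ, rfl⟩; exact hubspec μ hμ)
    have hMquad : ∀ y : H, Complex.re ⟪S y, y⟫_ℂ ≤ M * ‖y‖ ^ 2 :=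
      quad_le_of_spec_re S hSsa M (fun μ hμ => le_csSup hbddS ⟨μ, hμ, rfl⟩)
    have hMlb : 1 + t ≤ M := by
      by_contra hcon
      push_neg at hcon
      set c' := max 0 (M - 1) with hc'def
      have hc'0 : 0 ≤ c' := le_max_left _ _
      have hc'M : M - 1 ≤ c' := le_max_right _ _
      have hc't : c' < t := by
        rw [hc'def]
        exact max_lt htpos (by linarith)
      obtain ⟨z, hz⟩ : ∃ z : H, c' * ‖z‖ < ‖(P * Q) z‖ := by
        by_contra hno
        push_neg at hno
        have : ‖P * Q‖ ≤ c' := ContinuousLinearMap.opNorm_le_bound _ hc'0 hno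
        rw [← ht] at this
        linarith
      set w := Q z with hwdef
      have hPQz : (P * Q) z = P w := ContinuousLinearMap.mul_apply P Q z
      have hQw : Q w = w := hQQ z
      have hwz : ‖w‖ ≤ ‖z‖ := by
        have h1 : ‖Q z‖ ^ 2 = Complex.re ⟪Q z, z⟫_ℂ := (hQquad z).symm
        have h2 : Complex.re ⟪Q z, z⟫_ℂ ≤ ‖Q z‖ * ‖z‖ := by
          refine le_trans ?_ (norm_inner_le_norm (𝕜 := ℂ) _ _)
          simpa using RCLike.re_le_norm (⟪Q z, z⟫_ℂ)
        rw [hwdef]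
        nlinarith [norm_nonneg (Q z), norm_nonneg z]
      have hw0 : w ≠ 0 := by
        intro h0
        rw [hPQz, h0, map_zero, norm_zero] at hz
        nlinarith [norm_nonneg z, mul_nonneg hc'0 (norm_nonneg z)]
      have hwpos : 0 < ‖w‖ := norm_pos_iff.mpr hw0
      set x := (‖w‖)⁻¹ • w with hxdef
      have hx1 : ‖x‖ = 1 := norm_smul_inv_norm hw0
      have hQx : Q x = x := by rw [hxdef, ContinuousLinearMap.map_smul_of_tower, hQw]
      set c := ‖P x‖ with hcdef
      have hc' : c' < c := by
        have h1 : c = (‖w‖)⁻¹ * ‖P w‖ := by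
          rw [hcdef, hxdef, ContinuousLinearMap.map_smul_of_tower, norm_smul, Real.norm_eq_abs,
            abs_of_nonneg (inv_nonneg.mpr hwpos.le)]
        have h2 : c' * ‖w‖ ≤ c' * ‖z‖ := mul_le_mul_of_nonneg_left hwz hc'0
        have h3 : c' * ‖z‖ < ‖P w‖ := by rw [← hPQz]; exact hz
        have h4 : ‖w‖ * ((‖w‖)⁻¹ * ‖P w‖) = ‖P w‖ := by field_simp
        rw [h1]
        nlinarith [hwpos]
      have hcpos : 0 < c := lt_of_le_of_lt hc'0 hc'
      set y := x + ((c⁻¹ : ℝ) : ℂ) • P x with hydef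
      have hxPx : Complex.re ⟪x, P x⟫_ℂ = c ^ 2 := by
        rw [← inner_conj_symm, Complex.conj_re, hPquad x, hcdef]
      have hyn : ‖y‖ ^ 2 = 2 + 2 * c := by
        rw [hydef, norm_add_sq (𝕜 := ℂ), hx1, inner_smul_right, norm_smul]
        simp only [RCLike.re_to_complex, Complex.re_ofReal_mul, hxPx, Complex.norm_real,
          Real.norm_eq_abs, abs_of_nonneg (inv_nonneg.mpr hcpos.le)]
        rw [← hcdef]
        field_simp
        ring
      have hPy : P y = ((1 + c⁻¹ : ℝ) : ℂ) • P x := by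
        rw [hydef, map_add, ContinuousLinearMap.map_smul, hPP x]
        push_cast
        rw [add_smul, one_smul]
      have hPyn : ‖P y‖ ^ 2 = (1 + c⁻¹) ^ 2 * c ^ 2 := by
        rw [hPy, norm_smul, Complex.norm_real, Real.norm_eq_abs,
          abs_of_nonneg (by positivity), ← hcdef, mul_pow]
      have hQPre : Complex.re ⟪Q (P x), x⟫_ℂ = c ^ 2 := by
        have e0 : ⟪Q (P x), x⟫_ℂ = ⟪P x, Q x⟫_ℂ := hQsym (P x) x
        rw [e0, hQx, hPquad x, hcdef]
      have hxQPx : Complex.re ⟪x, Q (P x)⟫_ℂ = c ^ 2 := by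
        rw [← inner_conj_symm, Complex.conj_re, hQPre]
      have hQPxnorm : c ^ 2 ≤ ‖Q (P x)‖ := by
        have h2 : Complex.re ⟪Q (P x), x⟫_ℂ ≤ ‖Q (P x)‖ * ‖x‖ := by
          refine le_trans ?_ (norm_inner_le_norm (𝕜 := ℂ) _ _)
          simpa using RCLike.re_le_norm (⟪Q (P x), x⟫_ℂ)
        rw [hQPre, hx1, mul_one] at h2
        exact h2
      have hQy : Q y = x + ((c⁻¹ : ℝ) : ℂ) • Q (P x) := by
        rw [hydef, map_add, hQx, ContinuousLinearMap.map_smul]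
      have hQyn : 1 + 2 * c + c ^ 2 ≤ ‖Q y‖ ^ 2 := by
        rw [hQy, norm_add_sq (𝕜 := ℂ), hx1, inner_smul_right, norm_smul]
        simp only [RCLike.re_to_complex, Complex.re_ofReal_mul, hxQPx, Complex.norm_real,
          Real.norm_eq_abs, abs_of_nonneg (inv_nonneg.mpr hcpos.le)]
        have e1 : c⁻¹ * c ^ 2 = c := by field_simp
        have e4 := mul_le_mul_of_nonneg_left hQPxnorm (inv_nonneg.mpr hcpos.le)
        have e5 : c ≤ c⁻¹ * ‖Q (P x)‖ := by linarith [e4, e1]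
        have e2 : c ^ 2 ≤ (c⁻¹ * ‖Q (P x)‖) ^ 2 := by
          have := mul_self_le_mul_self hcpos.le e5
          nlinarith
        nlinarith [e1, e2]
      have hSy : 2 * (1 + c) ^ 2 ≤ Complex.re ⟪S y, y⟫_ℂ := by
        rw [hSquad y]
        have e1 : (1 + c⁻¹) ^ 2 * c ^ 2 = (1 + c) ^ 2 := by
          field_simp
          ring
        rw [hPyn, e1]
        nlinarith [hQyn]
      have hfin := hMquad y
      rw [hyn] at hfin
      nlinarith [hSy, hfin, hcpos]
    have hMeq : M = 1 + t := le_antisymm hMub hMlb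
    have hmemS : ((1 + t : ℝ) : ℂ) ∈ spectrum ℂ S := by
      have hMmem : M ∈ Complex.re '' spectrum ℂ S := himC.sSup_mem himne
      obtain ⟨μ, hμ, hμre⟩ := hMmem
      have hμ' : μ = ((μ.re : ℝ) : ℂ) := hSsa.mem_spectrum_eq_re hμ
      have : ((1 + t : ℝ) : ℂ) = μ := by rw [← hMeq, ← hμre, ← hμ']
      rw [this]
      exact hμ
    have hmemA : ((t ^ 2 + t : ℝ) : ℂ) ∈ spectrum ℂ (P * Q + Q * P) := by
      rw [hmap]
      refine ⟨((1 + t : ℝ) : ℂ), hmemS, ?_⟩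
      push_cast
      ring
    have hbddA : BddAbove (Complex.re '' spectrum ℂ (P * Q + Q * P)) :=
      ((spectrum.isCompact _).image Complex.continuous_re).bddAbove
    refine ⟨le_antisymm ?_ ?_, hmemA⟩
    · apply csSup_le ((spectrum.nonempty _).image _)
      rintro - ⟨μ, hμ, rfl⟩
      rw [hmap] at hμ
      obtain ⟨k, hk, rfl⟩ := hμ
      have hk' : k = ((k.re : ℝ) : ℂ) := hSsa.mem_spectrum_eq_re hk
      have h1 := hubspec k hk
      have h0 := hlbspec k hk
      have hre : Complex.re (k ^ 2 - k) = k.re ^ 2 - k.re := by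
        conv_lhs => rw [hk']
        rw [show (((k.re : ℝ) : ℂ) ^ 2 - ((k.re : ℝ) : ℂ)) = (((k.re ^ 2 - k.re : ℝ)) : ℂ) by
          push_cast; ring, Complex.ofReal_re]
      rw [hre]
      nlinarith [mul_nonneg (by linarith : (0:ℝ) ≤ 1 + t - k.re) (by linarith : (0:ℝ) ≤ k.re + t)]
    · apply le_csSup hbddA
      exact ⟨_, hmemA, Complex.ofReal_re _⟩
end
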